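/- Let $A$ be a symmetric traceless $n \times n$ real matrix, $n \ge 3$, with $A \ne 0$. If equality holds in the refined Kato inequality, i.e. $\sum_{j=1}^n A_{1j}^2 = \frac{n-1}{n}|A|^2$, then $A$ has exactly two eigenvalues $\lambda$ and $\mu = -\lambda/(n-1)$, with multiplicities $1$ and $n-1$ respectively, and the first standard basis vector $e_1$ is an eigenvector for $\lambda$. -/

import Mathlib

open Finset Polynomial

/-- equality case in the refined Kato inequality: if `A ≠ 0` is a
symmetric traceless real `n × n` matrix (`n ≥ 3`) with
`∑_j A_{1j}² = ((n-1)/n) |A|²`, then `e₁` is an eigenvector of `A` for some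
eigenvalue `λ`, and `A` has exactly the two eigenvalues `λ` and `μ = -λ/(n-1)`,
with multiplicities `1` and `n-1` respectively (expressed via the characteristic
polynomial `charpoly A = (X - λ)·(X - μ)^{n-1}` together with `λ ≠ μ`). -/
theorem refined_kato_equality_case
    (n : ℕ) (hn : 3 ≤ n)
    (A : Matrix (Fin n) (Fin n) ℝ) (hsym : A.IsSymm) (htr : A.trace = 0)
    (hA : A ≠ 0)
    (heq : ∑ j : Fin n, (A ⟨0, by omega⟩ j) ^ 2 =
      (((n : ℝ) - 1) / n) * ∑ i : Fin n, ∑ j : Fin n, (A i j) ^ 2) :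
    ∃ lam : ℝ,
      A.mulVec (Pi.single (⟨0, by omega⟩ : Fin n) (1 : ℝ)) =
        lam • (Pi.single (⟨0, by omega⟩ : Fin n) (1 : ℝ) : Fin n → ℝ) ∧
      lam ≠ -lam / ((n : ℝ) - 1) ∧
      A.charpoly = (X - C lam) * (X - C (-lam / ((n : ℝ) - 1))) ^ (n - 1) := by
  have hn0 : 0 < n := by omega
  set z : Fin n := ⟨0, by omega⟩ with hzdef
  have hnn : (3:ℝ) ≤ (n:ℝ) := by exact_mod_cast hn
  have h1pos : (0:ℝ) < (n:ℝ) - 1 := by linarith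
  have h2pos : (0:ℝ) < (n:ℝ) - 2 := by linarith
  have hnpos : (0:ℝ) < (n:ℝ) := by linarith
  set a : ℝ := A z z with ha
  set c : ℝ := -a / ((n:ℝ) - 1) with hc
  set U : Finset (Fin n) := Finset.univ.erase z with hUdef
  have hcardU : U.card = n - 1 := by
    rw [hUdef, Finset.card_erase_of_mem (Finset.mem_univ z), Finset.card_univ, Fintype.card_fin]
  have hcardUR : (U.card : ℝ) = (n:ℝ) - 1 := by
    rw [hcardU]; push_cast [Nat.cast_sub (by omega : 1 ≤ n)]; ring
  set R : ℝ := ∑ j, A z j ^ 2 with hR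
  set T : ℝ := ∑ i, ∑ j, A i j ^ 2 with hT
  set V : ℝ := ∑ j ∈ U, A z j ^ 2 with hV
  set Sd : ℝ := ∑ i ∈ U, A i i ^ 2 with hSd
  set W : ℝ := ∑ i ∈ U, ∑ j ∈ U.erase i, A i j ^ 2 with hW
  set D : ℝ := ∑ i ∈ U, (A i i - c) ^ 2 with hD
  have heq' : (n:ℝ) * R = ((n:ℝ) - 1) * T := by
    have h : R = (((n : ℝ) - 1) / n) * T := heq
    field_simp at h
    linarith [h]
  have h2 : R = a ^ 2 + V := by
    rw [hR, hV, ha, ← Finset.add_sum_erase Finset.univ _ (Finset.mem_univ z)]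
  have htr' : ∑ i, A i i = 0 := htr
  have h3 : ∑ i ∈ U, A i i = -a := by
    have := Finset.add_sum_erase Finset.univ (fun i => A i i) (Finset.mem_univ z)
    rw [htr'] at this
    rw [hUdef]; linarith [this]
  have e3 : ∑ i ∈ U, A i z ^ 2 = V := by
    rw [hV]; exact Finset.sum_congr rfl (fun i _ => by rw [hsym.apply z i])
  have h1 : T = R + V + Sd + W := by
    have e1 : T = R + ∑ i ∈ U, ∑ j, A i j ^ 2 :=
      (Finset.add_sum_erase Finset.univ _ (Finset.mem_univ z)).symm
    have e2 : ∀ i ∈ U, ∑ j, A i j ^ 2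
        = A i z ^ 2 + (A i i ^ 2 + ∑ j ∈ U.erase i, A i j ^ 2) := by
      intro i hi
      rw [← Finset.add_sum_erase Finset.univ _ (Finset.mem_univ z), ← hUdef,
        ← Finset.add_sum_erase U _ hi]
    rw [e1, Finset.sum_congr rfl e2, Finset.sum_add_distrib, Finset.sum_add_distrib, e3]
    rw [hSd, hW]; ring
  have h4 : D = Sd + 2 * c * a + ((n:ℝ) - 1) * c ^ 2 := by
    have e : ∀ i ∈ U, (A i i - c) ^ 2 = A i i ^ 2 - 2 * c * A i i + c ^ 2 :=
      fun i _ => by ring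
    rw [hD, Finset.sum_congr rfl e, Finset.sum_add_distrib, Finset.sum_sub_distrib,
      ← Finset.mul_sum, h3, Finset.sum_const, nsmul_eq_mul, hcardUR, hSd]
    ring
  have h4m : ((n:ℝ) - 1) * D = ((n:ℝ) - 1) * Sd - a ^ 2 := by
    rw [h4, hc]
    field_simp
    ring
  have hkey : ((n:ℝ) - 2) * V + ((n:ℝ) - 1) * W + ((n:ℝ) - 1) * D = 0 := by
    linear_combination (-1 : ℝ) * heq' - ((n:ℝ) - 1) * h1 + h2 + h4m
  have hVnn : 0 ≤ V := Finset.sum_nonneg fun _ _ => sq_nonneg _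
  have hWnn : 0 ≤ W := Finset.sum_nonneg fun _ _ => Finset.sum_nonneg fun _ _ => sq_nonneg _
  have hDnn : 0 ≤ D := Finset.sum_nonneg fun _ _ => sq_nonneg _
  have hVp := mul_nonneg h2pos.le hVnn
  have hWp := mul_nonneg h1pos.le hWnn
  have hDp := mul_nonneg h1pos.le hDnn
  have hV0 : V = 0 := by
    have : ((n:ℝ) - 2) * V = 0 := le_antisymm (by linarith) hVp
    rcases mul_eq_zero.mp this with h | h
    · linarith
    · exact h
  have hW0 : W = 0 := by
    have : ((n:ℝ) - 1) * W = 0 := le_antisymm (by linarith) hWp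
    rcases mul_eq_zero.mp this with h | h
    · linarith
    · exact h
  have hD0 : D = 0 := by
    have : ((n:ℝ) - 1) * D = 0 := le_antisymm (by linarith) hDp
    rcases mul_eq_zero.mp this with h | h
    · linarith
    · exact h
  have hrow : ∀ j ∈ U, A z j = 0 := by
    intro j hj
    have := (Finset.sum_eq_zero_iff_of_nonneg (fun i _ => sq_nonneg (A z i))).mp hV0.symm.symm j hj
    exact pow_eq_zero_iff two_ne_zero |>.mp this
  have hoff : ∀ i ∈ U, ∀ j ∈ U.erase i, A i j = 0 := by
    intro i hi j hj
    have hinner : ∑ j ∈ U.erase i, A i j ^ 2 = 0 :=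
      (Finset.sum_eq_zero_iff_of_nonneg
        (fun k _ => Finset.sum_nonneg fun _ _ => sq_nonneg _)).mp hW0 i hi
    have := (Finset.sum_eq_zero_iff_of_nonneg (fun k _ => sq_nonneg (A i k))).mp hinner j hj
    exact pow_eq_zero_iff two_ne_zero |>.mp this
  have hdiag : ∀ i ∈ U, A i i = c := by
    intro i hi
    have := (Finset.sum_eq_zero_iff_of_nonneg (fun k _ => sq_nonneg (A k k - c))).mp hD0 i hi
    have := pow_eq_zero_iff two_ne_zero |>.mp this
    linarith [this]
  have memU : ∀ i : Fin n, i ≠ z → i ∈ U :=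
    fun i hi => Finset.mem_erase.mpr ⟨hi, Finset.mem_univ _⟩
  have ha0 : a ≠ 0 := by
    intro h0
    apply hA
    have hc0 : c = 0 := by rw [hc, h0]; simp
    ext i j
    simp only [Matrix.zero_apply]
    by_cases hi : i = z
    · subst hi
      by_cases hj : j = z
      · subst hj; rw [← ha]; exact h0
      · exact hrow j (memU j hj)
    · by_cases hj : j = z
      · subst hj; rw [hsym.apply z i]; exact hrow i (memU i hi)
      · by_cases hij : i = j
        · subst hij; rw [hdiag i (memU i hi), hc0]
        · exact hoff i (memU i hi) j (Finset.mem_erase.mpr ⟨fun h => hij h.symm, memU j hj⟩)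
  have hac : a ≠ c := by
    intro h
    rw [hc] at h
    field_simp at h
    have hn2 : a * (n:ℝ) = 0 := by linear_combination a * h
    rcases mul_eq_zero.mp hn2 with h' | h'
    · exact ha0 h'
    · linarith
  set d : Fin n → ℝ := fun i => if i = z then a else c with hd
  have hAdiag : A = Matrix.diagonal d := by
    ext i j
    rw [Matrix.diagonal_apply]
    by_cases hij : i = j
    · subst hij
      rw [if_pos rfl, hd]
      by_cases hi : i = z
      · subst hi; simp [← ha]
      · simp only [if_neg hi]; exact hdiag i (memU i hi)
    · rw [if_neg hij]
      by_cases hi : i = z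
      · subst hi; exact hrow j (memU j (fun h => hij h.symm))
      · by_cases hj : j = z
        · subst hj; rw [hsym.apply z i]; exact hrow i (memU i hi)
        · exact hoff i (memU i hi) j (Finset.mem_erase.mpr ⟨fun h => hij h.symm, memU j hj⟩)
  refine ⟨a, ?_, ?_, ?_⟩
  · rw [hAdiag, Matrix.diagonal_mulVec_single]
    funext k
    by_cases hk : k = z
    · subst hk
      simp [hd]
    · simp [Pi.single_apply, hk]
  · rw [← hc]; exact hac
  · rw [← hc, hAdiag]
    have hcm : (Matrix.diagonal d).charmatrix
        = Matrix.diagonal (fun i => (X : ℝ[X]) - C (d i)) := by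
      ext i j
      by_cases hij : i = j
      · subst hij; simp
      · rw [Matrix.charmatrix_apply_ne _ _ _ hij, Matrix.diagonal_apply_ne _ hij,
          Matrix.diagonal_apply_ne _ hij, map_zero, neg_zero]
    rw [Matrix.charpoly, hcm, Matrix.det_diagonal,
      ← Finset.mul_prod_erase Finset.univ _ (Finset.mem_univ z), ← hUdef]
    have : ∀ i ∈ U, (X : ℝ[X]) - C (d i) = X - C c := by
      intro i hi
      rw [hd]
      simp only [if_neg (Finset.mem_erase.mp hi).1]
    rw [Finset.prod_congr rfl this, Finset.prod_const, hcardU, hd]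
    simp
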